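/- Suppose L ≥ 0 satisfies ‖φ(A)‖ ≤ L‖A‖ for all A ∈ ℝ^{n×p} (Frobenius norm). Then for all Y₁, Y₂, Z ∈ ℝ^{n×p}, ‖D𝒜(Y₁)[Z] − D𝒜(Y₂)[Z]‖ ≤ (3/2)L(‖Y₁‖ + ‖Y₂‖)‖Z‖‖Y₁ − Y₂‖, where D𝒜(Y)[Z] = (3/2)Z − (1/2)(Zφ(Y)ᵀY + Yφ(Z)ᵀY + Yφ(Y)ᵀZ) is the Fréchet derivative of 𝒜 at Y in direction Z. -/

import Mathlib

open Matrix

attribute [local instance] Matrix.frobeniusNormedAddCommGroup Matrix.frobeniusNormedSpace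

/-- Frobenius inner product `⟨A, B⟩ = tr(AᵀB)`. -/
noncomputable def frobInner {n p : ℕ} (A B : Matrix (Fin n) (Fin p) ℝ) : ℝ :=
  (Aᵀ * B).trace

/-- The constraint map `C(X) = Xᵀ φ(X) − I_p`. -/
noncomputable def Cmap {n p : ℕ}
    (φ : Matrix (Fin n) (Fin p) ℝ →ₗ[ℝ] Matrix (Fin n) (Fin p) ℝ)
    (X : Matrix (Fin n) (Fin p) ℝ) : Matrix (Fin p) (Fin p) ℝ :=
  Xᵀ * φ X - 1

/-- The constraint dissolving operator `𝒜(X) = (3/2)X − (1/2)X φ(X)ᵀ X`. -/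
noncomputable def Amap {n p : ℕ}
    (φ : Matrix (Fin n) (Fin p) ℝ →ₗ[ℝ] Matrix (Fin n) (Fin p) ℝ)
    (X : Matrix (Fin n) (Fin p) ℝ) : Matrix (Fin n) (Fin p) ℝ :=
  (3/2 : ℝ) • X - (1/2 : ℝ) • (X * (φ X)ᵀ * X)

/-- `𝒢 = span{X₁ᵀ X₂ : X₁, X₂ ∈ 𝓕}`. -/
noncomputable def Gspan {n p : ℕ} (𝓕 : Submodule ℝ (Matrix (Fin n) (Fin p) ℝ)) :
    Submodule ℝ (Matrix (Fin p) (Fin p) ℝ) :=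
  Submodule.span ℝ {T | ∃ X₁ ∈ 𝓕, ∃ X₂ ∈ 𝓕, T = X₁ᵀ * X₂}

theorem stmt_7 {n p : ℕ} (hn : 0 < n) (hp : 0 < p)
    (φ : Matrix (Fin n) (Fin p) ℝ →ₗ[ℝ] Matrix (Fin n) (Fin p) ℝ)
    (L : ℝ) (hL0 : 0 ≤ L)
    (hL : ∀ A : Matrix (Fin n) (Fin p) ℝ, ‖φ A‖ ≤ L * ‖A‖)
    (Y₁ Y₂ Z : Matrix (Fin n) (Fin p) ℝ) :
    ‖((3/2 : ℝ) • Z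
        - (1/2 : ℝ) • (Z * (φ Y₁)ᵀ * Y₁ + Y₁ * (φ Z)ᵀ * Y₁ + Y₁ * (φ Y₁)ᵀ * Z))
      - ((3/2 : ℝ) • Z
        - (1/2 : ℝ) • (Z * (φ Y₂)ᵀ * Y₂ + Y₂ * (φ Z)ᵀ * Y₂ + Y₂ * (φ Y₂)ᵀ * Z))‖
      ≤ (3/2 : ℝ) * L * (‖Y₁‖ + ‖Y₂‖) * ‖Z‖ * ‖Y₁ - Y₂‖ := by
  set E := Y₁ - Y₂ with hE
  have key : ((3/2 : ℝ) • Z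
        - (1/2 : ℝ) • (Z * (φ Y₁)ᵀ * Y₁ + Y₁ * (φ Z)ᵀ * Y₁ + Y₁ * (φ Y₁)ᵀ * Z))
      - ((3/2 : ℝ) • Z
        - (1/2 : ℝ) • (Z * (φ Y₂)ᵀ * Y₂ + Y₂ * (φ Z)ᵀ * Y₂ + Y₂ * (φ Y₂)ᵀ * Z))
      = -((1/2 : ℝ) • ((Z * (φ E)ᵀ * Y₁ + Z * (φ Y₂)ᵀ * E)
          + (E * (φ Z)ᵀ * Y₁ + Y₂ * (φ Z)ᵀ * E)
          + (E * (φ Y₁)ᵀ * Z + Y₂ * (φ E)ᵀ * Z))) := by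
    have hφE : φ E = φ Y₁ - φ Y₂ := by simp [hE, map_sub]
    simp only [hE, hφE, map_sub, Matrix.transpose_sub, Matrix.sub_mul, Matrix.mul_sub]
    module
  rw [key, norm_neg, norm_smul]
  have hZ : (0:ℝ) ≤ ‖Z‖ := norm_nonneg _
  have hY₁ : (0:ℝ) ≤ ‖Y₁‖ := norm_nonneg _
  have hY₂ : (0:ℝ) ≤ ‖Y₂‖ := norm_nonneg _
  have hEn : (0:ℝ) ≤ ‖E‖ := norm_nonneg _
  have hTr : ∀ A : Matrix (Fin n) (Fin p) ℝ, ‖(φ A)ᵀ‖ ≤ L * ‖A‖ := fun A => by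
    rw [Matrix.frobenius_norm_transpose]; exact hL A
  have mul3 : ∀ (A : Matrix (Fin n) (Fin p) ℝ) (B : Matrix (Fin p) (Fin n) ℝ)
      (C : Matrix (Fin n) (Fin p) ℝ) (c : ℝ), ‖B‖ ≤ c →
      ‖A * B * C‖ ≤ ‖A‖ * c * ‖C‖ := by
    intro A B C c hc
    calc ‖A * B * C‖ ≤ ‖A * B‖ * ‖C‖ := Matrix.frobenius_norm_mul _ _
    _ ≤ (‖A‖ * ‖B‖) * ‖C‖ :=
        mul_le_mul_of_nonneg_right (Matrix.frobenius_norm_mul _ _) (norm_nonneg _)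
    _ ≤ (‖A‖ * c) * ‖C‖ :=
        mul_le_mul_of_nonneg_right
          (mul_le_mul_of_nonneg_left hc (norm_nonneg _)) (norm_nonneg _)
  have b1 := mul3 Z (φ E)ᵀ Y₁ _ (hTr E)
  have b2 := mul3 Z (φ Y₂)ᵀ E _ (hTr Y₂)
  have b3 := mul3 E (φ Z)ᵀ Y₁ _ (hTr Z)
  have b4 := mul3 Y₂ (φ Z)ᵀ E _ (hTr Z)
  have b5 := mul3 E (φ Y₁)ᵀ Z _ (hTr Y₁)
  have b6 := mul3 Y₂ (φ E)ᵀ Z _ (hTr E)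
  have total : ‖(Z * (φ E)ᵀ * Y₁ + Z * (φ Y₂)ᵀ * E)
          + (E * (φ Z)ᵀ * Y₁ + Y₂ * (φ Z)ᵀ * E)
          + (E * (φ Y₁)ᵀ * Z + Y₂ * (φ E)ᵀ * Z)‖
      ≤ 3 * (L * (‖Y₁‖ + ‖Y₂‖) * ‖Z‖ * ‖E‖) := by
    calc _ ≤ ‖Z * (φ E)ᵀ * Y₁ + Z * (φ Y₂)ᵀ * E‖
          + ‖E * (φ Z)ᵀ * Y₁ + Y₂ * (φ Z)ᵀ * E‖
          + ‖E * (φ Y₁)ᵀ * Z + Y₂ * (φ E)ᵀ * Z‖ := norm_add₃_le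
    _ ≤ (‖Z * (φ E)ᵀ * Y₁‖ + ‖Z * (φ Y₂)ᵀ * E‖)
          + (‖E * (φ Z)ᵀ * Y₁‖ + ‖Y₂ * (φ Z)ᵀ * E‖)
          + (‖E * (φ Y₁)ᵀ * Z‖ + ‖Y₂ * (φ E)ᵀ * Z‖) :=
        add_le_add (add_le_add (norm_add_le _ _) (norm_add_le _ _)) (norm_add_le _ _)
    _ ≤ 3 * (L * (‖Y₁‖ + ‖Y₂‖) * ‖Z‖ * ‖E‖) := by nlinarith [b1, b2, b3, b4, b5, b6]
  have h12 : ‖(1/2 : ℝ)‖ = (1/2 : ℝ) := by norm_num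
  rw [h12]
  nlinarith [total]
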